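/- For every finite groupoid 𝒢 (a groupoid with finitely many objects and finite hom-sets), there exist a finite group G, a finite G-set X, and an equivalence of categories eℓ_G(X) ≃ 𝒢. -/

import Mathlib

set_option synthInstance.maxHeartbeats 1000000

open CategoryTheory

/-- A presentation of a groupoid `𝒢` as the category of elements (action groupoid) `eℓ_G(X)` of
a finite `G`-set `X` for some finite group `G`. -/
structure ElPresentation (𝒢 : Type) [Groupoid 𝒢] where
  /-- the finite group -/
  G : Type
  [grp : Group G]
  [finG : Fintype G]
  /-- the finite `G`-set -/
  X : Type
  [finX : Fintype X]
  [act : MulAction G X]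
  /-- the equivalence of categories `eℓ_G(X) ≃ 𝒢` -/
  equiv : ActionCategory G X ≌ 𝒢

attribute [instance] ElPresentation.grp ElPresentation.finG ElPresentation.finX
  ElPresentation.act

namespace ElPresentationAux

attribute [local instance] CategoryTheory.isIsomorphicSetoid

universe v

variable (𝒢 : Type) [Groupoid.{v} 𝒢] [∀ a b : 𝒢, Fintype (a ⟶ b)]

/-- isomorphism classes of objects -/
abbrev Q : Type := Quotient (isIsomorphicSetoid 𝒢)

/-- the big group: the product over all isomorphism classes of (a `Type 0` copy of) the vertex
group of a chosen representative -/
abbrev Gr : Type := ∀ q : Q 𝒢, Shrink.{0} ((Quotient.out q : 𝒢) ⟶ Quotient.out q)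

/-- the `Gr`-set: pairs of an isomorphism class and a group element normalized at that class -/
abbrev Xc : Type := Σ q : Q 𝒢, {f : Gr 𝒢 // f q = 1}

/-- shortcut instance: the vertex groups -/
noncomputable instance vGroup (q : Q 𝒢) :
    Group (Shrink.{0} ((Quotient.out q : 𝒢) ⟶ Quotient.out q)) := inferInstance

/-- shortcut instance: the big group -/
noncomputable instance grGroup : Group (Gr 𝒢) := inferInstance

/-- shortcut instance: finiteness of the vertex groups -/
instance vFinite (q : Q 𝒢) :
    Finite (Shrink.{0} ((Quotient.out q : 𝒢) ⟶ Quotient.out q)) :=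
  Finite.of_equiv _ (equivShrink _)

variable {𝒢}

/-- evaluation of an element of the big group at a class, as an automorphism -/
noncomputable def ev (g : Gr 𝒢) (q : Q 𝒢) : (Quotient.out q : 𝒢) ⟶ Quotient.out q :=
  (equivShrink _).symm (g q)

lemma ev_mul (g h : Gr 𝒢) (q : Q 𝒢) : ev (g * h) q = ev g q * ev h q :=
  equivShrink_symm_mul _ _

lemma ev_inv (g : Gr 𝒢) (q : Q 𝒢) : ev g⁻¹ q = (ev g q)⁻¹ :=
  equivShrink_symm_inv _

lemma ev_one (q : Q 𝒢) : ev (1 : Gr 𝒢) q = 1 :=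
  equivShrink_symm_one

lemma ev_inj {g h : Gr 𝒢} {q : Q 𝒢} (hgh : ev g q = ev h q) : g q = h q :=
  (equivShrink _).symm.injective hgh

variable (𝒢)

open Classical in
/-- the action of `Gr` on `Xc` -/
noncomputable def smulFun (g : Gr 𝒢) (x : Xc 𝒢) : Xc 𝒢 :=
  ⟨x.1, ⟨fun q' => if q' = x.1 then 1 else g q' * x.2.val q', if_pos rfl⟩⟩

variable {𝒢}

open Classical in
lemma smulFun_val (g : Gr 𝒢) (x : Xc 𝒢) (q' : Q 𝒢) :
    (smulFun 𝒢 g x).2.val q' = if q' = x.1 then 1 else g q' * x.2.val q' := rfl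

variable (𝒢)

noncomputable instance : MulAction (Gr 𝒢) (Xc 𝒢) where
  smul := smulFun 𝒢
  one_smul x := by
    refine congrArg (Sigma.mk x.1) (Subtype.ext (funext fun q' => ?_))
    dsimp only [smulFun]
    split
    · next h => rw [h, x.2.property]
    · simp
  mul_smul g h x := by
    show smulFun 𝒢 (g * h) x = smulFun 𝒢 g (smulFun 𝒢 h x)
    refine congrArg (Sigma.mk x.1) (Subtype.ext (funext fun q' => ?_))
    dsimp only [smulFun]
    split
    · next h => exact (if_pos h).symm
    · next hne => rw [Pi.mul_apply, mul_assoc]; exact (if_neg hne).symm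

lemma smul_def (g : Gr 𝒢) (x : Xc 𝒢) : g • x = smulFun 𝒢 g x := rfl

variable {𝒢}

/-- the underlying group element of a morphism in the action groupoid -/
def hval {p p' : ActionCategory (Gr 𝒢) (Xc 𝒢)} (f : p ⟶ p') : Gr 𝒢 := f.val

lemma hval_smul {p p' : ActionCategory (Gr 𝒢) (Xc 𝒢)} (f : p ⟶ p') :
    hval f • p.back = p'.back := f.property

lemma hval_comp {p p' p'' : ActionCategory (Gr 𝒢) (Xc 𝒢)} (f : p ⟶ p') (g : p' ⟶ p'') :
    hval (f ≫ g) = hval g * hval f := rfl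

lemma hval_id (p : ActionCategory (Gr 𝒢) (Xc 𝒢)) : hval (𝟙 p) = 1 := rfl

lemma back_fst_eq {p p' : ActionCategory (Gr 𝒢) (Xc 𝒢)} (f : p ⟶ p') :
    p.back.1 = p'.back.1 := by rw [← hval_smul f]; rfl

variable (𝒢)

/-- The comparison functor from the action groupoid to `𝒢`. -/
noncomputable def F : ActionCategory (Gr 𝒢) (Xc 𝒢) ⥤ 𝒢 where
  obj p := Quotient.out p.back.1
  map {p p'} f :=
    eqToHom (congrArg Quotient.out (back_fst_eq f)) ≫
      ev (p.back.2.val⁻¹ * (hval f)⁻¹ * p'.back.2.val) p'.back.1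
  map_id p := by
    simp only [hval_id, inv_one, mul_one, eqToHom_refl, Category.id_comp]
    rw [inv_mul_cancel, ev_one]
    rfl
  map_comp {p p' p''} f g := by
    rcases p with ⟨⟨⟩, q1, x1⟩
    rcases p' with ⟨⟨⟩, q2, x2⟩
    rcases p'' with ⟨⟨⟩, q3, x3⟩
    obtain rfl : q1 = q2 := back_fst_eq f
    obtain rfl : q1 = q3 := back_fst_eq g
    dsimp only [ActionCategory.back]
    show 𝟙 (Quotient.out q1) ≫ ev (x1.val⁻¹ * (hval (f ≫ g))⁻¹ * x3.val) q1 =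
      (𝟙 (Quotient.out q1) ≫ ev (x1.val⁻¹ * (hval f)⁻¹ * x2.val) q1) ≫
        𝟙 (Quotient.out q1) ≫ ev (x2.val⁻¹ * (hval g)⁻¹ * x3.val) q1
    simp only [Category.id_comp]
    rw [← Groupoid.vertexGroup_mul, ← ev_mul]
    show ev (x1.val⁻¹ * (hval g * hval f)⁻¹ * x3.val) q1 = _
    congr 1
    group

noncomputable instance faithfulF : (F 𝒢).Faithful := ⟨by
  intro p p' f g h
  rcases p with ⟨⟨⟩, q1, x1⟩
  rcases p' with ⟨⟨⟩, q2, x2⟩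
  obtain rfl : q1 = q2 := back_fst_eq f
  dsimp only [F, ActionCategory.back] at h
  change 𝟙 (Quotient.out q1) ≫ ev (x1.val⁻¹ * (hval f)⁻¹ * x2.val) q1 =
    𝟙 (Quotient.out q1) ≫ ev (x1.val⁻¹ * (hval g)⁻¹ * x2.val) q1 at h
  simp only [Category.id_comp] at h
  have h' := ev_inj h
  simp only [Pi.mul_apply, Pi.inv_apply] at h'
  have hq1 : hval f q1 = hval g q1 := by
    have := mul_left_cancel (mul_right_cancel h')
    exact inv_injective this
  apply Subtype.ext
  show hval f = hval g
  funext q'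
  by_cases hq : q' = q1
  · subst hq; exact hq1
  · have hf := congrArg (fun z : Xc 𝒢 => z.2.val q') (hval_smul f)
    have hg := congrArg (fun z : Xc 𝒢 => z.2.val q') (hval_smul g)
    dsimp only [ActionCategory.back] at hf hg
    replace hf : hval f q' * x1.val q' = x2.val q' := Eq.trans (if_neg hq).symm hf
    replace hg : hval g q' * x1.val q' = x2.val q' := Eq.trans (if_neg hq).symm hg
    exact mul_right_cancel (hf.trans hg.symm)⟩

noncomputable instance fullF : (F 𝒢).Full := ⟨by
  intro p p' φ
  rcases p with ⟨⟨⟩, q1, x1⟩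
  rcases p' with ⟨⟨⟩, q2, x2⟩
  obtain rfl : q1 = q2 := by
    rw [← Quotient.out_eq q1, ← Quotient.out_eq q2]
    exact Quotient.sound ⟨(Groupoid.isoEquivHom _ _).symm φ⟩
  classical
  set φ' : Shrink.{0} ((Quotient.out q1 : 𝒢) ⟶ Quotient.out q1) := equivShrink _ φ with hφ'
  refine ⟨⟨x2.val * (Function.update x1.val q1 φ')⁻¹, ?_⟩, ?_⟩
  · show (x2.val * (Function.update x1.val q1 φ')⁻¹) • (⟨q1, x1⟩ : Xc 𝒢) = ⟨q1, x2⟩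
    rw [smul_def]
    refine congrArg (Sigma.mk q1) (Subtype.ext (funext fun q' => ?_))
    dsimp only [smulFun]
    by_cases hq : q' = q1
    · subst hq; rw [if_pos rfl, x2.property]
    · rw [if_neg hq, Pi.mul_apply, Pi.inv_apply, Function.update_of_ne hq,
        inv_mul_cancel_right]
  · dsimp only [F, ActionCategory.back]
    erw [eqToHom_refl, Category.id_comp]
    show ev (x1.val⁻¹ * (x2.val * (Function.update x1.val q1 φ')⁻¹)⁻¹ * x2.val) q1 = φ
    have : (x1.val⁻¹ * (x2.val * (Function.update x1.val q1 φ')⁻¹)⁻¹ * x2.val) q1 = φ' := by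
      simp only [Pi.mul_apply, Pi.inv_apply, x1.property, x2.property,
        Function.update_self, inv_one, one_mul, mul_one, mul_inv_rev, inv_inv]
    rw [ev, this, hφ']; exact Equiv.symm_apply_apply _ _⟩

noncomputable instance essSurjF : (F 𝒢).EssSurj := ⟨fun a => by
  refine ⟨ActionCategory.objEquiv (Gr 𝒢) (Xc 𝒢) ⟨⟦a⟧, 1, rfl⟩, ⟨?_⟩⟩
  show Quotient.out (⟦a⟧ : Q 𝒢) ≅ a
  exact Nonempty.some (Quotient.mk_out a)⟩

end ElPresentationAux

/-- **Statement 3.** Every finite groupoid (finitely many objects, finite hom-sets) is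
equivalent to the category of elements `eℓ_G(X)` of a finite `G`-set `X`, for some finite
group `G`. -/
theorem exists_elPresentation (𝒢 : Type) [Groupoid 𝒢] [Fintype 𝒢]
    [∀ a b : 𝒢, Fintype (a ⟶ b)] : Nonempty (ElPresentation 𝒢) := by
  haveI : (ElPresentationAux.F 𝒢).IsEquivalence := {}
  exact ⟨{ G := ElPresentationAux.Gr 𝒢
           grp := inferInstance
           finG := Fintype.ofFinite _
           X := ElPresentationAux.Xc 𝒢
           finX := Fintype.ofFinite _
           act := inferInstance
           equiv := (ElPresentationAux.F 𝒢).asEquivalence }⟩
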